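/- Let E be a finite set, p ≥ 2 an integer, M > 1, and K : {X : X ⊆ E} → ℝ with K(X) = 0 whenever |X| > p; set ||K|| = sup_{e ∈ E} Σ_{X : e ∈ X} |K(X)|. For n ≥ 1 and e ∈ E, let a_n(e) = Σ_{Γ connected, |Γ| = n, e ∈ ∪Γ} Π_{X ∈ Γ} 2|K(X)| M^{|X|} and a_n = sup_{e ∈ E} a_n(e). Then a_1 ≤ 2||K||M^p, and for all n ≥ 1 the recursive bound a_n ≤ 2||K||M^p Σ_{k=0}^{p} C(p,k) Σ_{n_1 + … + n_k = n−1, n_i ≥ 1} a_{n_1} ⋯ a_{n_k} holds, where C(p,k) is the binomial coefficient (the k = 0 term being the empty product 1 when n = 1). -/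

import Mathlib

open Finset

attribute [local instance] Classical.propDecidable

/-- A hypergraph `Γ` (a finite collection of subsets/links of `E`) is connected if its support
`∪Γ` is nonempty and cannot be partitioned into two nonempty disjoint parts such that every
link lies entirely inside one of the two parts. -/
def HyperConnected {E : Type*} [DecidableEq E] (Γ : Finset (Finset E)) : Prop :=
  (Γ.sup id).Nonempty ∧
    ∀ A B : Finset E, A ∪ B = Γ.sup id → Disjoint A B → A.Nonempty → B.Nonempty →
      ∃ X ∈ Γ, ¬ X ⊆ A ∧ ¬ X ⊆ B

/-- `a_n(e)`: the contribution of connected hypergraphs with `n` links rooted at `e`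
(i.e. `e ∈ ∪Γ`), each link `X` carrying the factor `2|K(X)| M^{|X|}`. -/
noncomputable def rootedContribution {E : Type*} [Fintype E] [DecidableEq E]
    (K : Finset E → ℝ) (M : ℝ) (n : ℕ) (e : E) : ℝ :=
  ∑ Γ ∈ Finset.univ.filter (fun Γ : Finset (Finset E) =>
      (∀ X ∈ Γ, X.Nonempty) ∧ HyperConnected Γ ∧ Γ.card = n ∧ e ∈ Γ.sup id),
    ∏ X ∈ Γ, (2 * |K X| * M ^ X.card)

/-- `a_n = sup_{e ∈ E} a_n(e)`. -/
noncomputable def rootedSup {E : Type*} [Fintype E] [DecidableEq E]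
    (K : Finset E → ℝ) (M : ℝ) (n : ℕ) : ℝ :=
  ⨆ e : E, rootedContribution K M n e

namespace ClusterAux

variable {E : Type*} [DecidableEq E]

/-- reachability between links of `Γ` -/
def Reach (Γ : Finset (Finset E)) : Finset E → Finset E → Prop :=
  Relation.ReflTransGen (fun A B => A ∈ Γ ∧ B ∈ Γ ∧ (A ∩ B).Nonempty)

theorem reach_symm {Γ : Finset (Finset E)} {X Y : Finset E} (h : Reach Γ X Y) :
    Reach Γ Y X :=
  (@Relation.ReflTransGen.symmetric _ _
    ⟨fun A B hab => ⟨hab.2.1, hab.1, by rw [inter_comm]; exact hab.2.2⟩⟩).symm _ _ h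

theorem reach_trans {Γ : Finset (Finset E)} {X Y Z : Finset E}
    (h : Reach Γ X Y) (h' : Reach Γ Y Z) : Reach Γ X Z := h.trans h'

theorem reach_mem {Γ : Finset (Finset E)} {X Y : Finset E} (h : Reach Γ X Y) :
    X = Y ∨ Y ∈ Γ := by
  induction h with
  | refl => exact Or.inl rfl
  | tail _ hstep _ => exact Or.inr hstep.2.1

/-- connected component of the link `X` in `Γ` -/
noncomputable def comp (Γ : Finset (Finset E)) (X : Finset E) : Finset (Finset E) :=
  Γ.filter (Reach Γ X)

theorem comp_subset (Γ : Finset (Finset E)) (X : Finset E) : comp Γ X ⊆ Γ :=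
  filter_subset _ _

theorem mem_comp_self {Γ : Finset (Finset E)} {X : Finset E} (h : X ∈ Γ) :
    X ∈ comp Γ X := mem_filter.2 ⟨h, Relation.ReflTransGen.refl⟩

theorem comp_eq_of_mem {Γ : Finset (Finset E)} {X Y : Finset E} (h : Y ∈ comp Γ X) :
    comp Γ Y = comp Γ X := by
  rcases mem_filter.1 h with ⟨hY, hXY⟩
  ext Z
  simp only [comp, mem_filter]
  exact ⟨fun hz => ⟨hz.1, hXY.trans hz.2⟩, fun hz => ⟨hz.1, (reach_symm hXY).trans hz.2⟩⟩

theorem adj_mem_comp {Γ : Finset (Finset E)} {X Y Z : Finset E} (hY : Y ∈ comp Γ X)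
    (hZ : Z ∈ Γ) (hadj : (Y ∩ Z).Nonempty) : Z ∈ comp Γ X := by
  rcases mem_filter.1 hY with ⟨hYΓ, hXY⟩
  exact mem_filter.2 ⟨hZ, hXY.tail ⟨hYΓ, hZ, hadj⟩⟩

/-- An element of the support of a component pins down the component. -/
theorem comp_eq_of_mem_sup {Γ : Finset (Finset E)} {X Y : Finset E} {y : E}
    (hX : X ∈ Γ) (h1 : y ∈ (comp Γ X).sup id) (h2 : y ∈ (comp Γ Y).sup id) :
    comp Γ X = comp Γ Y := by
  rcases mem_sup.1 h1 with ⟨Z1, hZ1, hy1⟩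
  rcases mem_sup.1 h2 with ⟨Z2, hZ2, hy2⟩
  have : Z2 ∈ comp Γ X :=
    adj_mem_comp hZ1 (comp_subset _ _ hZ2) ⟨y, mem_inter.2 ⟨hy1, hy2⟩⟩
  rw [← comp_eq_of_mem this, comp_eq_of_mem hZ2]

theorem subset_sup_comp {Γ : Finset (Finset E)} {X Y : Finset E} (h : Y ∈ comp Γ X) :
    Y ⊆ (comp Γ X).sup id := le_sup (f := id) h

/-- Components are connected hypergraphs. -/
theorem comp_connected {Γ : Finset (Finset E)} {X : Finset E} (hX : X ∈ Γ)
    (hne : ∀ Z ∈ Γ, Z.Nonempty) : HyperConnected (comp Γ X) := by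
  constructor
  · rcases hne X hX with ⟨x, hx⟩
    exact ⟨x, mem_sup.2 ⟨X, mem_comp_self hX, hx⟩⟩
  · intro A B hAB hdis hA hB
    by_contra hcon
    push_neg at hcon
    have hside : ∀ Z ∈ comp Γ X, Z ⊆ A ∨ Z ⊆ B := fun Z hZ => by
      by_cases h : Z ⊆ A
      · exact Or.inl h
      · exact Or.inr (hcon Z hZ h)
    have key : ∀ (C D : Finset E), Disjoint C D → (∀ Z ∈ comp Γ X, Z ⊆ C ∨ Z ⊆ D) →
        X ⊆ C → ∀ Y, Reach Γ X Y → Y ⊆ C := by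
      intro C D hCD hsides hXC Y hreach
      induction hreach with
      | refl => exact hXC
      | tail hr hstep ih =>
        rename_i Y Z
        have hZcomp : Z ∈ comp Γ X := mem_filter.2 ⟨hstep.2.1, hr.tail hstep⟩
        rcases hsides Z hZcomp with h | h
        · exact h
        · rcases hstep.2.2 with ⟨w, hw⟩
          rcases mem_inter.1 hw with ⟨hw1, hw2⟩
          exact absurd (disjoint_left.1 hCD (ih hw1) (h hw2)) (fun q => q)
    have main : ∀ (C D : Finset E), Disjoint C D → (∀ Z ∈ comp Γ X, Z ⊆ C ∨ Z ⊆ D) →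
        C ∪ D = (comp Γ X).sup id → X ⊆ C → D.Nonempty → False := by
      intro C D hCD hsides hCD' hXC ⟨b, hb⟩
      have hbsup : b ∈ (comp Γ X).sup id := hCD' ▸ mem_union_right _ hb
      rcases mem_sup.1 hbsup with ⟨Y, hY, hbY⟩
      have : Y ⊆ C := key C D hCD hsides hXC Y (mem_filter.1 hY).2
      exact disjoint_left.1 hCD (this hbY) hb
    rcases hside X (mem_comp_self hX) with h | h
    · exact main A B hdis hside hAB h hB
    · exact main B A hdis.symm (fun Z hZ => (hside Z hZ).symm)
        (by rw [union_comm]; exact hAB) h hA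

/-- the component containing the vertex `s` -/
noncomputable def ecomp (Γ : Finset (Finset E)) (s : E) : Finset (Finset E) :=
  Γ.filter (fun Y => ∃ X ∈ Γ, s ∈ X ∧ Reach Γ X Y)

theorem ecomp_subset (Γ : Finset (Finset E)) (s : E) : ecomp Γ s ⊆ Γ := filter_subset _ _

theorem ecomp_eq_comp {Γ : Finset (Finset E)} {X : Finset E} {s : E}
    (hX : X ∈ Γ) (hs : s ∈ X) : ecomp Γ s = comp Γ X := by
  ext Y
  simp only [ecomp, comp, mem_filter]
  constructor
  · rintro ⟨hY, X', hX', hsX', hreach⟩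
    refine ⟨hY, Relation.ReflTransGen.trans ?_ hreach⟩
    exact Relation.ReflTransGen.single ⟨hX, hX', ⟨s, mem_inter.2 ⟨hs, hsX'⟩⟩⟩
  · rintro ⟨hY, hreach⟩
    exact ⟨hY, X, hX, hs, hreach⟩

/-- In a connected hypergraph `insert X₁ Γ`, the support of every component of `Γ`
meets `X₁`. -/
theorem comp_meets {Γ : Finset (Finset E)} {X₁ X : Finset E}
    (hcon : HyperConnected (insert X₁ Γ)) (hX₁ : X₁.Nonempty)
    (hne : ∀ Z ∈ Γ, Z.Nonempty) (hX : X ∈ Γ) :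
    (((comp Γ X).sup id) ∩ X₁).Nonempty := by
  by_contra hemp
  rw [not_nonempty_iff_eq_empty] at hemp
  set S := (comp Γ X).sup id with hS
  set T := (insert X₁ Γ).sup id with hT
  have hST : S ⊆ T := sup_mono ((comp_subset Γ X).trans (subset_insert _ _))
  have hunion : S ∪ (T \ S) = T := union_sdiff_of_subset hST
  have hAne : S.Nonempty := by
    rcases hne X hX with ⟨x, hx⟩
    exact ⟨x, mem_sup.2 ⟨X, mem_comp_self hX, hx⟩⟩
  have hBne : (T \ S).Nonempty := by
    rcases hX₁ with ⟨x, hx⟩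
    refine ⟨x, mem_sdiff.2 ⟨mem_sup.2 ⟨X₁, mem_insert_self _ _, hx⟩, fun hxS => ?_⟩⟩
    exact absurd (mem_inter.2 ⟨hxS, hx⟩) (by rw [hemp]; exact notMem_empty x)
  rcases hcon.2 S (T \ S) hunion disjoint_sdiff hAne hBne with ⟨Z, hZ, hZA, hZB⟩
  have hZT : Z ⊆ T := le_sup (f := id) hZ
  have hZS : (Z ∩ S).Nonempty := by
    by_contra hz
    rw [not_nonempty_iff_eq_empty] at hz
    refine hZB fun z hz' => mem_sdiff.2 ⟨hZT hz', fun hzS => ?_⟩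
    exact absurd (mem_inter.2 ⟨hz', hzS⟩) (by rw [hz]; exact notMem_empty z)
  rcases hZS with ⟨y, hy⟩
  rcases mem_inter.1 hy with ⟨hyZ, hyS⟩
  have hZX₁ : Z ≠ X₁ := by
    rintro rfl
    exact absurd (mem_inter.2 ⟨hyS, hyZ⟩) (by rw [hemp]; exact notMem_empty y)
  have hZΓ : Z ∈ Γ := (mem_insert.1 hZ).resolve_left hZX₁
  rcases mem_sup.1 hyS with ⟨Y, hY, hyY⟩
  have : Z ∈ comp Γ X := adj_mem_comp hY hZΓ ⟨y, mem_inter.2 ⟨hyY, hyZ⟩⟩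
  exact hZA (subset_sup_comp this)

section Root

variable [LinearOrder E]

/-- the smallest element of `(sup (comp Γ X)) ∩ X₁`, or the default `d` -/
noncomputable def rootD (d : E) (X₁ : Finset E) (Γ : Finset (Finset E)) (X : Finset E) : E :=
  if h : (((comp Γ X).sup id) ∩ X₁).Nonempty then (((comp Γ X).sup id) ∩ X₁).min' h else d

theorem rootD_mem {d : E} {X₁ : Finset E} {Γ : Finset (Finset E)} {X : Finset E}
    (h : (((comp Γ X).sup id) ∩ X₁).Nonempty) :
    rootD d X₁ Γ X ∈ ((comp Γ X).sup id) ∩ X₁ := by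
  rw [rootD, dif_pos h]; exact min'_mem _ h

theorem rootD_congr {d : E} {X₁ : Finset E} {Γ : Finset (Finset E)} {X Y : Finset E}
    (h : comp Γ X = comp Γ Y) : rootD d X₁ Γ X = rootD d X₁ Γ Y := by
  rw [rootD, rootD, h]

/-- the set of roots of the components of `Γ` -/
noncomputable def Smap (d : E) (X₁ : Finset E) (Γ : Finset (Finset E)) : Finset E :=
  Γ.image (rootD d X₁ Γ)

variable {d : E} {X₁ : Finset E} {Γ : Finset (Finset E)}
  (hmeets : ∀ X ∈ Γ, (((comp Γ X).sup id) ∩ X₁).Nonempty)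

include hmeets

theorem Smap_subset : Smap d X₁ Γ ⊆ X₁ := by
  intro s hs
  rcases mem_image.1 hs with ⟨X, hX, rfl⟩
  exact (mem_inter.1 (rootD_mem (hmeets X hX))).2

theorem ecomp_rootD {X : Finset E} (hX : X ∈ Γ) :
    ecomp Γ (rootD d X₁ Γ X) = comp Γ X := by
  have h1 : rootD d X₁ Γ X ∈ (comp Γ X).sup id :=
    (mem_inter.1 (rootD_mem (hmeets X hX))).1
  rcases mem_sup.1 h1 with ⟨X', hX', hmem⟩
  rw [ecomp_eq_comp (comp_subset Γ X hX') hmem, comp_eq_of_mem hX']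

theorem ecomp_eq_comp_of_mem_Smap {s : E} (hs : s ∈ Smap d X₁ Γ) :
    ∃ X ∈ Γ, ecomp Γ s = comp Γ X ∧ rootD d X₁ Γ X = s := by
  rcases mem_image.1 hs with ⟨X, hX, rfl⟩
  exact ⟨X, hX, ecomp_rootD hmeets hX, rfl⟩

theorem Smap_disjoint {s s' : E} (hs : s ∈ Smap d X₁ Γ) (hs' : s' ∈ Smap d X₁ Γ)
    (hne : s ≠ s') : Disjoint (ecomp Γ s) (ecomp Γ s') := by
  rcases ecomp_eq_comp_of_mem_Smap hmeets hs with ⟨X, hX, hcX, hrX⟩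
  rcases ecomp_eq_comp_of_mem_Smap hmeets hs' with ⟨Y, hY, hcY, hrY⟩
  rw [disjoint_left]
  intro Z hZ hZ'
  rw [hcX] at hZ
  rw [hcY] at hZ'
  exact hne (hrX ▸ hrY ▸ rootD_congr ((comp_eq_of_mem hZ).symm.trans (comp_eq_of_mem hZ')))

theorem biUnion_ecomp : (Smap d X₁ Γ).biUnion (ecomp Γ) = Γ := by
  apply Subset.antisymm
  · intro X hX
    exact ecomp_subset _ _ (mem_biUnion.1 hX).choose_spec.2
  · intro X hX
    refine mem_biUnion.2 ⟨rootD d X₁ Γ X, mem_image_of_mem _ hX, ?_⟩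
    rw [ecomp_rootD hmeets hX]
    exact mem_comp_self hX

theorem card_eq_sum_ecomp : Γ.card = ∑ s ∈ Smap d X₁ Γ, (ecomp Γ s).card := by
  conv_lhs => rw [← biUnion_ecomp (d := d) hmeets]
  exact card_biUnion fun s hs s' hs' h => Smap_disjoint hmeets hs hs' h

theorem mem_sup_ecomp {s : E} (hs : s ∈ Smap d X₁ Γ) : s ∈ (ecomp Γ s).sup id := by
  rcases ecomp_eq_comp_of_mem_Smap hmeets hs with ⟨X, hX, hcX, hrX⟩
  rw [hcX, ← hrX]
  exact (mem_inter.1 (rootD_mem (hmeets X hX))).1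

theorem ecomp_connected {s : E} (hs : s ∈ Smap d X₁ Γ) (hne : ∀ Z ∈ Γ, Z.Nonempty) :
    HyperConnected (ecomp Γ s) := by
  rcases ecomp_eq_comp_of_mem_Smap hmeets hs with ⟨X, hX, hcX, _⟩
  rw [hcX]
  exact comp_connected hX hne

theorem ecomp_card_pos {s : E} (hs : s ∈ Smap d X₁ Γ) : 1 ≤ (ecomp Γ s).card := by
  rcases ecomp_eq_comp_of_mem_Smap hmeets hs with ⟨X, hX, hcX, _⟩
  rw [hcX]
  exact card_pos.2 ⟨X, mem_comp_self hX⟩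

end Root

theorem sum_le_sum_of_inj {α β : Type*} [DecidableEq β] {s : Finset α} {t : Finset β}
    (φ : α → β) (hφ : ∀ a ∈ s, φ a ∈ t) (hinj : ∀ a ∈ s, ∀ a' ∈ s, φ a = φ a' → a = a')
    {f : α → ℝ} {g : β → ℝ} (hg : ∀ b ∈ t, 0 ≤ g b) (hfg : ∀ a ∈ s, f a = g (φ a)) :
    ∑ a ∈ s, f a ≤ ∑ b ∈ t, g b := by
  have h1 : ∑ a ∈ s, f a = ∑ b ∈ s.image φ, g b := by
    rw [sum_image hinj]
    exact sum_congr rfl hfg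
  rw [h1]
  refine sum_le_sum_of_subset_of_nonneg ?_ fun b hb _ => hg b hb
  intro b hb
  rcases mem_image.1 hb with ⟨a, ha, rfl⟩
  exact hφ a ha

theorem image_orderEmbOfFin [LinearOrder E] (S : Finset E) :
    Finset.univ.image (S.orderEmbOfFin rfl) = S := by
  ext s
  simp only [mem_image, mem_univ, true_and]
  constructor
  · rintro ⟨i, rfl⟩
    exact orderEmbOfFin_mem _ _ _
  · intro hs
    have : s ∈ Set.range (S.orderEmbOfFin rfl) := by
      rw [range_orderEmbOfFin]
      exact hs
    rcases this with ⟨i, hi⟩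
    exact ⟨i, hi⟩

theorem prod_fin_eq_prod_S [LinearOrder E] (S : Finset E) {β : Type*} [CommMonoid β]
    (f : E → β) : ∏ i : Fin S.card, f (S.orderEmbOfFin rfl i) = ∏ s ∈ S, f s := by
  have h := prod_image (s := (Finset.univ : Finset (Fin S.card)))
    (g := ⇑(S.orderEmbOfFin rfl)) (f := f)
    (fun i _ j _ h => (S.orderEmbOfFin rfl).injective h)
  rw [image_orderEmbOfFin] at h
  exact h.symm

theorem sum_fin_eq_sum_S [LinearOrder E] (S : Finset E) {β : Type*} [AddCommMonoid β]
    (f : E → β) : ∑ i : Fin S.card, f (S.orderEmbOfFin rfl i) = ∑ s ∈ S, f s := by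
  have h := sum_image (s := (Finset.univ : Finset (Fin S.card)))
    (g := ⇑(S.orderEmbOfFin rfl)) (f := f)
    (fun i _ j _ h => (S.orderEmbOfFin rfl).injective h)
  rw [image_orderEmbOfFin] at h
  exact h.symm

variable [Fintype E]

/-- connected hypergraphs with `n` links, rooted at `s` -/
noncomputable def ConnSet (n : ℕ) (s : E) : Finset (Finset (Finset E)) :=
  Finset.univ.filter (fun Γ : Finset (Finset E) =>
    (∀ X ∈ Γ, X.Nonempty) ∧ HyperConnected Γ ∧ Γ.card = n ∧ s ∈ Γ.sup id)

/-- hypergraphs `Γ'` such that `insert X₁ Γ'` is a connected hypergraph with `n` links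
containing the link `X₁` -/
noncomputable def Dset (X₁ : Finset E) (n : ℕ) : Finset (Finset (Finset E)) :=
  Finset.univ.filter (fun Γ' : Finset (Finset E) =>
    X₁ ∉ Γ' ∧ (∀ X ∈ Γ', X.Nonempty) ∧ HyperConnected (insert X₁ Γ') ∧ Γ'.card = n - 1)

set_option maxHeartbeats 1000000 in
theorem key [LinearOrder E] (w : Finset E → ℝ) (hw : ∀ X, 0 ≤ w X)
    (A : ℕ → ℝ) (hA0 : ∀ m, 0 ≤ A m)
    (hA : ∀ (s : E) (m : ℕ), ∑ C ∈ ConnSet m s, ∏ X ∈ C, w X ≤ A m)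
    (X₁ : Finset E) (hX₁ : X₁.Nonempty) (n : ℕ) :
    ∑ Γ' ∈ Dset X₁ n, ∏ X ∈ Γ', w X ≤
      ∑ k ∈ Finset.range (X₁.card + 1), (X₁.card.choose k : ℝ) *
        ∑ t ∈ (Finset.Nat.antidiagonalTuple k (n - 1)).filter (fun t => ∀ i, 1 ≤ t i),
          ∏ i, A (t i) := by
  classical
  obtain ⟨d, hd⟩ := hX₁
  -- all components of a member of `Dset` meet `X₁`
  have hmeets : ∀ Γ' ∈ Dset X₁ n, ∀ X ∈ Γ', (((comp Γ' X).sup id) ∩ X₁).Nonempty := by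
    intro Γ' hΓ' X hX
    rcases mem_filter.1 hΓ' with ⟨-, -, hne, hcon, -⟩
    exact comp_meets hcon ⟨d, hd⟩ hne hX
  have hmapsS : ∀ Γ' ∈ Dset X₁ n, Smap d X₁ Γ' ∈ X₁.powerset := fun Γ' hΓ' =>
    mem_powerset.2 (Smap_subset (hmeets Γ' hΓ'))
  rw [← sum_fiberwise_of_maps_to hmapsS]
  have hfiber : ∀ S ∈ X₁.powerset,
      (∑ Γ' ∈ (Dset X₁ n).filter (fun Γ' => Smap d X₁ Γ' = S), ∏ X ∈ Γ', w X) ≤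
      ∑ t ∈ (Finset.Nat.antidiagonalTuple S.card (n - 1)).filter (fun t => ∀ i, 1 ≤ t i),
        ∏ i, A (t i) := by
    intro S hS
    have hmapsT : ∀ Γ' ∈ (Dset X₁ n).filter (fun Γ' => Smap d X₁ Γ' = S),
        (fun i => (ecomp Γ' (S.orderEmbOfFin rfl i)).card) ∈
          (Finset.Nat.antidiagonalTuple S.card (n - 1)).filter (fun t => ∀ i, 1 ≤ t i) := by
      intro Γ' hΓ'
      rcases mem_filter.1 hΓ' with ⟨hD, hSm⟩
      have hme := hmeets Γ' hD
      refine mem_filter.2 ⟨?_, ?_⟩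
      · rw [Finset.Nat.mem_antidiagonalTuple]
        rw [sum_fin_eq_sum_S S (fun s => (ecomp Γ' s).card), ← hSm,
          ← card_eq_sum_ecomp (d := d) hme]
        exact (mem_filter.1 hD).2.2.2.2
      · intro i
        refine ecomp_card_pos (d := d) hme ?_
        rw [hSm]
        exact orderEmbOfFin_mem _ _ _
    rw [← sum_fiberwise_of_maps_to hmapsT]
    refine sum_le_sum fun t ht => ?_
    -- per (S, t) fiber: inject into the product over components
    have h2 : (∏ i, ∑ C ∈ ConnSet (t i) (S.orderEmbOfFin rfl i), ∏ X ∈ C, w X) ≤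
        ∏ i, A (t i) := by
      refine prod_le_prod (fun i _ => ?_) (fun i _ => hA _ _)
      exact sum_nonneg fun C _ => prod_nonneg fun X _ => hw X
    refine le_trans ?_ h2
    rw [prod_univ_sum]
    refine sum_le_sum_of_inj (fun Γ' i => ecomp Γ' (S.orderEmbOfFin rfl i)) ?_ ?_ ?_ ?_
    · -- maps into the piFinset
      intro Γ' hΓ'
      rcases mem_filter.1 hΓ' with ⟨hΓ'', htm⟩
      rcases mem_filter.1 hΓ'' with ⟨hD, hSm⟩
      have hme := hmeets Γ' hD
      rcases mem_filter.1 hD with ⟨-, -, hne, hcon, hcard⟩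
      rw [Fintype.mem_piFinset]
      intro i
      have hσS : S.orderEmbOfFin rfl i ∈ Smap d X₁ Γ' := by
        rw [hSm]; exact orderEmbOfFin_mem _ _ _
      refine mem_filter.2 ⟨mem_univ _, fun X hX => hne X (ecomp_subset _ _ hX),
        ecomp_connected (d := d) hme hσS hne, ?_, mem_sup_ecomp (d := d) hme hσS⟩
      exact congrFun htm i
    · -- injectivity
      intro Γ₁ hΓ₁ Γ₂ hΓ₂ hφ
      rcases mem_filter.1 hΓ₁ with ⟨hΓ₁', -⟩
      rcases mem_filter.1 hΓ₁' with ⟨hD₁, hSm₁⟩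
      rcases mem_filter.1 hΓ₂ with ⟨hΓ₂', -⟩
      rcases mem_filter.1 hΓ₂' with ⟨hD₂, hSm₂⟩
      have e₁ : Γ₁ = S.biUnion (ecomp Γ₁) := by
        conv_lhs => rw [← biUnion_ecomp (d := d) (hmeets Γ₁ hD₁)]
        rw [hSm₁]
      have e₂ : Γ₂ = S.biUnion (ecomp Γ₂) := by
        conv_lhs => rw [← biUnion_ecomp (d := d) (hmeets Γ₂ hD₂)]
        rw [hSm₂]
      rw [e₁, e₂]
      refine biUnion_congr rfl fun s hs => ?_
      have : s ∈ Finset.univ.image (S.orderEmbOfFin rfl) := by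
        rw [image_orderEmbOfFin]; exact hs
      rcases mem_image.1 this with ⟨i, -, rfl⟩
      exact congrFun hφ i
    · -- nonnegativity of the target
      intro g _
      exact prod_nonneg fun i _ => prod_nonneg fun X _ => hw X
    · -- weights agree
      intro Γ' hΓ'
      rcases mem_filter.1 hΓ' with ⟨hΓ'', -⟩
      rcases mem_filter.1 hΓ'' with ⟨hD, hSm⟩
      have hme := hmeets Γ' hD
      rw [prod_fin_eq_prod_S S (fun s => ∏ X ∈ ecomp Γ' s, w X)]
      rw [← prod_biUnion]
      · congr 1
        conv_lhs => rw [← biUnion_ecomp (d := d) hme, hSm]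
      · intro s hs s' hs' hne'
        rw [← hSm] at hs hs'
        exact Smap_disjoint (d := d) hme hs hs' hne'
  calc ∑ S ∈ X₁.powerset, ∑ Γ' ∈ (Dset X₁ n).filter (fun Γ' => Smap d X₁ Γ' = S),
        ∏ X ∈ Γ', w X
      ≤ ∑ S ∈ X₁.powerset,
          ∑ t ∈ (Finset.Nat.antidiagonalTuple S.card (n - 1)).filter (fun t => ∀ i, 1 ≤ t i),
            ∏ i, A (t i) := sum_le_sum hfiber
    _ = ∑ k ∈ Finset.range (X₁.card + 1), X₁.card.choose k •
          ∑ t ∈ (Finset.Nat.antidiagonalTuple k (n - 1)).filter (fun t => ∀ i, 1 ≤ t i),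
            ∏ i, A (t i) :=
        sum_powerset_apply_card (fun k =>
          ∑ t ∈ (Finset.Nat.antidiagonalTuple k (n - 1)).filter (fun t => ∀ i, 1 ≤ t i),
            ∏ i, A (t i))
    _ = _ := sum_congr rfl fun k _ => nsmul_eq_mul _ _


section Main

variable (K : Finset E → ℝ) (M : ℝ)

noncomputable def wK : Finset E → ℝ := fun X => 2 * |K X| * M ^ X.card

theorem wK_nonneg (hM : 0 ≤ M) (X : Finset E) : 0 ≤ wK K M X := by
  exact mul_nonneg (mul_nonneg (by norm_num) (abs_nonneg _)) (pow_nonneg hM _)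

theorem rootedContribution_eq (n : ℕ) (e : E) :
    (∑ Γ ∈ ConnSet n e, ∏ X ∈ Γ, wK K M X) =
      (∑ Γ ∈ Finset.univ.filter (fun Γ : Finset (Finset E) =>
        (∀ X ∈ Γ, X.Nonempty) ∧ HyperConnected Γ ∧ Γ.card = n ∧ e ∈ Γ.sup id),
      ∏ X ∈ Γ, (2 * |K X| * M ^ X.card)) := rfl

theorem connSum_eq (n : ℕ) (e : E) :
    (∑ Γ ∈ ConnSet n e, ∏ X ∈ Γ, wK K M X) = rootedContribution K M n e := rfl

theorem step4 (hM : 0 ≤ M) (n : ℕ) (e : E) :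
    (∑ Γ ∈ ConnSet n e, ∏ X ∈ Γ, wK K M X) ≤
    ∑ X₁ ∈ Finset.univ.filter (fun X : Finset E => e ∈ X),
      wK K M X₁ * ∑ Γ' ∈ Dset X₁ n, ∏ X ∈ Γ', wK K M X := by
  have h1 : (∑ Γ ∈ ConnSet n e, ∏ X ∈ Γ, wK K M X) ≤
      ∑ Γ ∈ ConnSet n e, ∑ X₁ ∈ Finset.univ.filter (fun X : Finset E => e ∈ X),
        (if X₁ ∈ Γ then ∏ X ∈ Γ, wK K M X else 0) := by
    refine sum_le_sum fun Γ hΓ => ?_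
    rcases mem_sup.1 ((mem_filter.1 hΓ).2.2.2.2) with ⟨X₁, hX₁Γ, heX₁⟩
    have h := single_le_sum (s := Finset.univ.filter (fun X : Finset E => e ∈ X))
      (f := fun X₁ => if X₁ ∈ Γ then (∏ X ∈ Γ, wK K M X) else 0)
      (fun i _ => by
        split_ifs
        · exact prod_nonneg fun X _ => wK_nonneg K M hM X
        · exact le_refl 0)
      (mem_filter.2 ⟨mem_univ X₁, (heX₁ : e ∈ X₁)⟩)
    rwa [if_pos hX₁Γ] at h
  refine h1.trans ?_
  rw [sum_comm]
  refine sum_le_sum fun X₁ hX₁ => ?_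
  rw [← sum_filter]
  have h2 : ∀ Γ ∈ (ConnSet n e).filter (fun Γ => X₁ ∈ Γ),
      (∏ X ∈ Γ, wK K M X) = wK K M X₁ * ∏ X ∈ Γ.erase X₁, wK K M X := fun Γ hΓ =>
    (mul_prod_erase Γ _ (mem_filter.1 hΓ).2).symm
  rw [sum_congr rfl h2, ← mul_sum]
  refine mul_le_mul_of_nonneg_left ?_ (wK_nonneg K M hM X₁)
  refine sum_le_sum_of_inj (fun Γ => Γ.erase X₁) ?_ ?_ ?_ ?_
  · intro Γ hΓ
    rcases mem_filter.1 hΓ with ⟨hΓc, hX₁Γ⟩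
    rcases mem_filter.1 hΓc with ⟨-, hne, hcon, hcard, -⟩
    refine mem_filter.2 ⟨mem_univ _, notMem_erase _ _,
      fun X hX => hne X (erase_subset _ _ hX), ?_, ?_⟩
    · rwa [insert_erase hX₁Γ]
    · rw [card_erase_of_mem hX₁Γ, hcard]
  · intro Γ hΓ Γ' hΓ' h
    rw [← insert_erase (mem_filter.1 hΓ).2, h, insert_erase (mem_filter.1 hΓ').2]
  · intro Γ' _
    exact prod_nonneg fun X _ => wK_nonneg K M hM X
  · intro Γ _
    rfl

theorem step5 [LinearOrder E] (hM : 0 ≤ M) (A : ℕ → ℝ) (hA0 : ∀ m, 0 ≤ A m)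
    (hA : ∀ (s : E) (m : ℕ), ∑ C ∈ ConnSet m s, ∏ X ∈ C, wK K M X ≤ A m)
    (p : ℕ) (X₁ : Finset E) (hX₁ : X₁.Nonempty) (hcard : X₁.card ≤ p) (n : ℕ) :
    ∑ Γ' ∈ Dset X₁ n, ∏ X ∈ Γ', wK K M X ≤
      ∑ k ∈ Finset.range (p + 1), (p.choose k : ℝ) *
        ∑ t ∈ (Finset.Nat.antidiagonalTuple k (n - 1)).filter (fun t => ∀ i, 1 ≤ t i),
          ∏ i, A (t i) := by
  have hFnn : ∀ k, 0 ≤ ∑ t ∈ (Finset.Nat.antidiagonalTuple k (n - 1)).filter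
      (fun t => ∀ i, 1 ≤ t i), ∏ i, A (t i) :=
    fun k => sum_nonneg fun t _ => prod_nonneg fun i _ => hA0 _
  refine (key (wK K M) (wK_nonneg K M hM) A hA0 hA X₁ hX₁ n).trans ?_
  refine le_trans (sum_le_sum fun k _ => ?_) (sum_le_sum_of_subset_of_nonneg ?_ ?_)
  · refine mul_le_mul_of_nonneg_right ?_ (hFnn k)
    exact_mod_cast Nat.cast_le.2 (Nat.choose_le_choose k hcard)
  · exact range_subset_range.2 (by omega)
  · intro k _ _
    exact mul_nonneg (by positivity) (hFnn k)

set_option maxHeartbeats 1000000 in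
theorem main_bound (l : LinearOrder E) (p : ℕ) (hM : 1 ≤ M)
    (hfin : ∀ X : Finset E, p < X.card → K X = 0) (n : ℕ) :
    rootedSup K M n ≤
      2 * (⨆ e : E, ∑ X ∈ Finset.univ.filter (fun X : Finset E => e ∈ X), |K X|) * M ^ p *
        ∑ k ∈ Finset.range (p + 1), (p.choose k : ℝ) *
          ∑ t ∈ (Finset.Nat.antidiagonalTuple k (n - 1)).filter (fun t => ∀ i, 1 ≤ t i),
            ∏ i, rootedSup K M (t i) := by
  have hM0 : (0:ℝ) ≤ M := le_trans zero_le_one hM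
  set NK := ⨆ e : E, ∑ X ∈ Finset.univ.filter (fun X : Finset E => e ∈ X), |K X| with hNK
  set R := ∑ k ∈ Finset.range (p + 1), (p.choose k : ℝ) *
      ∑ t ∈ (Finset.Nat.antidiagonalTuple k (n - 1)).filter (fun t => ∀ i, 1 ≤ t i),
        ∏ i, rootedSup K M (t i) with hR
  have hA0 : ∀ m, 0 ≤ rootedSup K M m := fun m =>
    Real.iSup_nonneg fun e => sum_nonneg fun Γ _ => prod_nonneg fun X _ =>
      mul_nonneg (mul_nonneg (by norm_num) (abs_nonneg _)) (pow_nonneg hM0 _)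
  have hA : ∀ (s : E) (m : ℕ), (∑ C ∈ ConnSet m s, ∏ X ∈ C, wK K M X) ≤ rootedSup K M m := by
    intro s m
    rw [connSum_eq]
    exact le_ciSup (Finite.bddAbove_range _) s
  have hRnn : 0 ≤ R := sum_nonneg fun k _ => mul_nonneg (Nat.cast_nonneg _)
    (sum_nonneg fun t _ => prod_nonneg fun i _ => hA0 _)
  have hNKnn : 0 ≤ NK := Real.iSup_nonneg fun e => sum_nonneg fun X _ => abs_nonneg _
  refine Real.iSup_le (fun e => ?_) (mul_nonneg (mul_nonneg (mul_nonneg (by norm_num) hNKnn) (pow_nonneg hM0 p)) hRnn)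
  calc rootedContribution K M n e
      = ∑ Γ ∈ ConnSet n e, ∏ X ∈ Γ, wK K M X := (connSum_eq K M n e).symm
    _ ≤ ∑ X₁ ∈ Finset.univ.filter (fun X : Finset E => e ∈ X),
          wK K M X₁ * ∑ Γ' ∈ Dset X₁ n, ∏ X ∈ Γ', wK K M X := step4 K M hM0 n e
    _ ≤ ∑ X₁ ∈ Finset.univ.filter (fun X : Finset E => e ∈ X),
          (2 * |K X₁| * M ^ p) * R := by
        refine sum_le_sum fun X₁ hX₁ => ?_
        have heX₁ : e ∈ X₁ := (mem_filter.1 hX₁).2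
        by_cases hc : X₁.card ≤ p
        · refine mul_le_mul ?_
            (step5 K M hM0 (rootedSup K M) hA0 hA p X₁ ⟨e, heX₁⟩ hc n)
            (sum_nonneg fun Γ' _ => prod_nonneg fun X _ => wK_nonneg K M hM0 X)
            (mul_nonneg (mul_nonneg (by norm_num) (abs_nonneg _)) (pow_nonneg hM0 p))
          simp only [wK]
          exact mul_le_mul_of_nonneg_left
            (pow_le_pow_right₀ hM hc) (mul_nonneg (by norm_num) (abs_nonneg _))
        · have h0 : K X₁ = 0 := hfin X₁ (lt_of_not_ge hc)
          simp only [wK, h0, abs_zero, mul_zero, zero_mul]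
          exact le_refl 0
    _ = (∑ X₁ ∈ Finset.univ.filter (fun X : Finset E => e ∈ X), |K X₁|) * (2 * M ^ p * R) := by
        rw [sum_mul]
        exact sum_congr rfl fun X₁ _ => by ring
    _ ≤ NK * (2 * M ^ p * R) := by
        refine mul_le_mul_of_nonneg_right ?_
          (mul_nonneg (mul_nonneg (by norm_num) (pow_nonneg hM0 p)) hRnn)
        rw [hNK]
        exact le_ciSup (f := fun e : E =>
          ∑ X ∈ Finset.univ.filter (fun X : Finset E => e ∈ X), |K X|)
          (Finite.bddAbove_range _) e
    _ = 2 * NK * M ^ p * R := by ring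

theorem Rone (A : ℕ → ℝ) (p : ℕ) :
    (∑ k ∈ Finset.range (p + 1), (p.choose k : ℝ) *
      ∑ t ∈ (Finset.Nat.antidiagonalTuple k 0).filter (fun t => ∀ i, 1 ≤ t i),
        ∏ i, A (t i)) = 1 := by
  rw [Finset.sum_eq_single_of_mem 0 (mem_range.2 (Nat.succ_pos p))]
  · rw [Finset.Nat.antidiagonalTuple_zero_right, Nat.choose_zero_right]
    rw [filter_singleton, if_pos (fun i => i.elim0)]
    simp
  · intro k _ hk
    rw [Finset.Nat.antidiagonalTuple_zero_right, filter_singleton, if_neg, sum_empty, mul_zero]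
    intro h
    exact absurd (h ⟨0, Nat.pos_of_ne_zero hk⟩) (by simp)

end Main

end ClusterAux

/-- `a_1 ≤ 2||K||M^p`, and for all `n ≥ 1` the recursive bound
`a_n ≤ 2||K||M^p Σ_{k=0}^p C(p,k) Σ_{n_1+…+n_k = n−1, n_i ≥ 1} a_{n_1} ⋯ a_{n_k}` holds,
where `||K|| = sup_{e ∈ E} Σ_{X : e ∈ X} |K(X)|`. -/
theorem rooted_contribution_recursive_bound {E : Type*} [Fintype E] [DecidableEq E]
    (p : ℕ) (hp : 2 ≤ p) (M : ℝ) (hM : 1 < M) (K : Finset E → ℝ)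
    (hfin : ∀ X : Finset E, p < X.card → K X = 0) :
    rootedSup K M 1 ≤
      2 * (⨆ e : E, ∑ X ∈ Finset.univ.filter (fun X : Finset E => e ∈ X), |K X|) * M ^ p ∧
    ∀ n : ℕ, 1 ≤ n →
      rootedSup K M n ≤
        2 * (⨆ e : E, ∑ X ∈ Finset.univ.filter (fun X : Finset E => e ∈ X), |K X|) * M ^ p *
          ∑ k ∈ Finset.range (p + 1), (p.choose k : ℝ) *
            ∑ t ∈ (Finset.Nat.antidiagonalTuple k (n - 1)).filter (fun t => ∀ i, 1 ≤ t i),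
              ∏ i, rootedSup K M (t i) := by
  have l : LinearOrder E := LinearOrder.lift' (⇑(Fintype.equivFin E)) (Equiv.injective _)
  have h2 : ∀ n : ℕ, 1 ≤ n →
      rootedSup K M n ≤
        2 * (⨆ e : E, ∑ X ∈ Finset.univ.filter (fun X : Finset E => e ∈ X), |K X|) * M ^ p *
          ∑ k ∈ Finset.range (p + 1), (p.choose k : ℝ) *
            ∑ t ∈ (Finset.Nat.antidiagonalTuple k (n - 1)).filter (fun t => ∀ i, 1 ≤ t i),
              ∏ i, rootedSup K M (t i) :=
    fun n _ => ClusterAux.main_bound K M l p hM.le hfin n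
  refine ⟨?_, h2⟩
  have h := h2 1 le_rfl
  rwa [show (1:ℕ) - 1 = 0 from rfl, ClusterAux.Rone (rootedSup K M) p, mul_one] at h
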